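/- Let φ(x) = 2((1+x)log(1+x) − x)/x² for x > 0. Then lim_{x↓0} φ(x) = 1 and φ(x) ≥ 1/(1 + x/3) for all x > 0. -/

import Mathlib

open Filter

lemma mono_from_deriv {f g : ℝ → ℝ} (hd : ∀ x : ℝ, 0 ≤ x → HasDerivAt f (g x) x)
    (hg : ∀ x : ℝ, 0 ≤ x → 0 ≤ g x) : ∀ x : ℝ, 0 ≤ x → f 0 ≤ f x := by
  have hmono : MonotoneOn f (Set.Ici (0:ℝ)) := by
    apply monotoneOn_of_deriv_nonneg (convex_Ici 0)
    · intro x hx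
      exact ((hd x hx).continuousAt).continuousWithinAt
    · intro x hx
      rw [interior_Ici] at hx
      exact ((hd x hx.le).differentiableAt).differentiableWithinAt
    · intro x hx
      rw [interior_Ici] at hx
      rw [(hd x hx.le).deriv]
      exact hg x hx.le
  intro x hx
  exact hmono Set.self_mem_Ici hx hx

lemma hasDerivAt_log1p {x : ℝ} (hx : 0 ≤ x) :
    HasDerivAt (fun y : ℝ => Real.log (1 + y)) (1 / (1 + x)) x := by
  have h1 : (0:ℝ) < 1 + x := by linarith
  have := ((hasDerivAt_id x).const_add 1).log h1.ne'
  simpa using this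

lemma lemA : ∀ x : ℝ, 0 ≤ x →
    (18 * x + 3 * x ^ 2) / (2 * (3 + x) ^ 2) ≤ Real.log (1 + x) := by
  have key := mono_from_deriv
    (f := fun y : ℝ => Real.log (1 + y) - (18 * y + 3 * y ^ 2) / (2 * (3 + y) ^ 2))
    (g := fun y : ℝ => 1 / (1 + y) - 27 / (3 + y) ^ 3)
    (by
      intro x hx
      have h3 : (2 * (3 + x) ^ 2 : ℝ) ≠ 0 := by positivity
      have hu : HasDerivAt (fun y : ℝ => 18 * y + 3 * y ^ 2) (18 + 6 * x) x := by
        have := ((hasDerivAt_id x).const_mul 18).add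
          (((hasDerivAt_pow 2 x)).const_mul 3)
        exact this.congr_deriv (by ring)
      have hv : HasDerivAt (fun y : ℝ => 2 * (3 + y) ^ 2) (2 * (2 * (3 + x))) x := by
        have h := (((hasDerivAt_id x).const_add 3).pow 2).const_mul 2
        exact h.congr_deriv (by simp only [id, Nat.cast_ofNat]; ring)
      have hdiv := hu.div hv h3
      have := (hasDerivAt_log1p hx).sub hdiv
      apply this.congr_deriv
      have h1 : (1 + x : ℝ) ≠ 0 := by positivity
      have h3' : (3 + x : ℝ) ≠ 0 := by positivity
      field_simp
      ring)
    (by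
      intro x hx
      have h1 : (0:ℝ) < 1 + x := by linarith
      have h3 : (0:ℝ) < (3 + x) ^ 3 := by positivity
      rw [sub_nonneg, div_le_div_iff₀ h3 h1]
      nlinarith [sq_nonneg x, pow_pos (show (0:ℝ) < 3 + x by linarith) 2])
  intro x hx
  have := key x hx
  simp only [Real.log_one, add_zero] at this
  norm_num at this
  linarith [this]

lemma lemB : ∀ x : ℝ, 0 ≤ x →
    3 * x ^ 2 / (2 * (3 + x)) ≤ (1 + x) * Real.log (1 + x) - x := by
  have key := mono_from_deriv
    (f := fun y : ℝ => (1 + y) * Real.log (1 + y) - y - 3 * y ^ 2 / (2 * (3 + y)))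
    (g := fun y : ℝ => Real.log (1 + y) - (18 * y + 3 * y ^ 2) / (2 * (3 + y) ^ 2))
    (by
      intro x hx
      have h1 : (0:ℝ) < 1 + x := by linarith
      have h3 : (2 * (3 + x) : ℝ) ≠ 0 := by positivity
      have hlog := hasDerivAt_log1p hx
      have hprod : HasDerivAt (fun y : ℝ => (1 + y) * Real.log (1 + y))
          (1 * Real.log (1 + x) + (1 + x) * (1 / (1 + x))) x :=
        ((hasDerivAt_id x).const_add 1).mul hlog
      have hu : HasDerivAt (fun y : ℝ => 3 * y ^ 2) (6 * x) x := by
        have := (hasDerivAt_pow 2 x).const_mul 3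
        simpa using this.congr_deriv (by ring)
      have hv : HasDerivAt (fun y : ℝ => 2 * (3 + y)) 2 x := by
        have := ((hasDerivAt_id x).const_add 3).const_mul 2
        simpa using this
      have hdiv := hu.div hv h3
      have := (hprod.sub (hasDerivAt_id x)).sub hdiv
      apply this.congr_deriv
      have h3' : (3 + x : ℝ) ≠ 0 := by positivity
      field_simp
      ring)
    (by
      intro x hx
      rw [sub_nonneg]
      exact lemA x hx)
  intro x hx
  have := key x hx
  norm_num at this
  linarith [this]

lemma lemC : ∀ x : ℝ, 0 ≤ x →
    (1 + x) * Real.log (1 + x) - x ≤ x ^ 2 / 2 := by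
  have key := mono_from_deriv
    (f := fun y : ℝ => y ^ 2 / 2 - ((1 + y) * Real.log (1 + y) - y))
    (g := fun y : ℝ => y - Real.log (1 + y))
    (by
      intro x hx
      have h1 : (0:ℝ) < 1 + x := by linarith
      have hlog := hasDerivAt_log1p hx
      have hprod : HasDerivAt (fun y : ℝ => (1 + y) * Real.log (1 + y))
          (1 * Real.log (1 + x) + (1 + x) * (1 / (1 + x))) x :=
        ((hasDerivAt_id x).const_add 1).mul hlog
      have hsq : HasDerivAt (fun y : ℝ => y ^ 2 / 2) x x := by
        have := (hasDerivAt_pow 2 x).div_const 2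
        simpa using this.congr_deriv (by ring)
      have := hsq.sub (hprod.sub (hasDerivAt_id x))
      apply this.congr_deriv
      field_simp
      ring)
    (by
      intro x hx
      show 0 ≤ x - Real.log (1 + x)
      have h1 : (0:ℝ) < 1 + x := by linarith
      have := Real.log_le_sub_one_of_pos h1
      linarith)
  intro x hx
  have := key x hx
  norm_num at this
  linarith [this]

/-- The Bennett function `φ(x) = 2((1+x)log(1+x) − x)/x²` satisfies
`lim_{x↓0} φ(x) = 1` and `φ(x) ≥ 1/(1+x/3)` for all `x > 0`. -/
theorem bennett_phi_properties (φ : ℝ → ℝ)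
    (hφ : ∀ x : ℝ, 0 < x → φ x = 2 * ((1 + x) * Real.log (1 + x) - x) / x^2) :
    Tendsto φ (nhdsWithin 0 (Set.Ioi 0)) (nhds 1) ∧
    ∀ x : ℝ, 0 < x → 1 / (1 + x / 3) ≤ φ x := by
  have hlow : ∀ x : ℝ, 0 < x → 1 / (1 + x / 3) ≤ φ x := by
    intro x hx
    rw [hφ x hx]
    have hB := lemB x hx.le
    have hx2 : (0:ℝ) < x ^ 2 := by positivity
    have h13 : (0:ℝ) < 1 + x / 3 := by linarith
    have hB' : 3 * x ^ 2 ≤ ((1 + x) * Real.log (1 + x) - x) * (2 * (3 + x)) :=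
      (div_le_iff₀ (by positivity)).mp hB
    rw [div_le_div_iff₀ h13 hx2]
    nlinarith [hB']
  refine ⟨?_, hlow⟩
  have hup : ∀ x : ℝ, 0 < x → φ x ≤ 1 := by
    intro x hx
    rw [hφ x hx]
    have hC := lemC x hx.le
    have hx2 : (0:ℝ) < x ^ 2 := by positivity
    rw [div_le_one hx2]
    nlinarith
  have hg : Tendsto (fun x : ℝ => 1 / (1 + x / 3)) (nhdsWithin 0 (Set.Ioi 0)) (nhds 1) := by
    have : ContinuousAt (fun x : ℝ => 1 / (1 + x / 3)) 0 := by
      apply ContinuousAt.div continuousAt_const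
      · fun_prop
      · norm_num
    have h2 := this.tendsto.mono_left (nhdsWithin_le_nhds (s := Set.Ioi (0:ℝ)))
    simpa using h2
  refine tendsto_of_tendsto_of_tendsto_of_le_of_le' hg tendsto_const_nhds ?_ ?_
  · filter_upwards [self_mem_nhdsWithin] with x hx
    exact hlow x hx
  · filter_upwards [self_mem_nhdsWithin] with x hx
    exact hup x hx
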